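/- Under PRDS, for each null index k and each r ∈ {1,…,K}, P(R_𝒟 = r | P_k ≤ αr/K) ≤ β_{k,r} − β_{k,r+1}, where β_{k,r} = P(R_𝒟 ≥ r | P_k ≤ αr/K) and β_{k,K+1} = 0; consequently Σ_{r=1}^K P(R_𝒟 = r | P_k ≤ αr/K) ≤ 1. -/

import Mathlib

open MeasureTheory ProbabilityTheory Finset
open scoped ENNReal Classical

noncomputable section

/-- The `i`-th smallest value (0-indexed) among `p 0, …, p (K-1)`. -/
def sortAsc {K : ℕ} (p : Fin K → ℝ) : Fin K → ℝ := p ∘ Tuple.sort p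

/-- The `i`-th largest value (0-indexed) among `e 0, …, e (K-1)`. -/
def sortDesc {K : ℕ} (e : Fin K → ℝ) : Fin K → ℝ := e ∘ Tuple.sort (fun j => -e j)

/-- `k* = max {k : K p_(k) / k ≤ α}` (with `max ∅ = 0`), the BH rejection count. -/
def bhCount (K : ℕ) (α : ℝ) (p : Fin K → ℝ) : ℕ :=
  (univ.filter (fun i : Fin K => (K : ℝ) * sortAsc p i / (i.1 + 1) ≤ α)).sup
    (fun i => i.1 + 1)

/-- The BH procedure rejects the hypotheses carrying the `k*` smallest p-values. -/
def bhRejects (K : ℕ) (α : ℝ) (p : Fin K → ℝ) : Finset (Fin K) :=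
  univ.filter (fun k => ∃ i : Fin K, i.1 + 1 ≤ bhCount K α p ∧ p k ≤ sortAsc p i)

/-- `k* = max {k : k e_[k] / K ≥ 1/α}`, the e-BH rejection count. -/
def ebhCount (K : ℕ) (α : ℝ) (e : Fin K → ℝ) : ℕ :=
  (univ.filter (fun i : Fin K => 1 / α ≤ (i.1 + 1) * sortDesc e i / K)).sup
    (fun i => i.1 + 1)

/-- The e-BH procedure rejects the hypotheses carrying the `k*` largest e-values. -/
def ebhRejects (K : ℕ) (α : ℝ) (e : Fin K → ℝ) : Finset (Fin K) :=
  univ.filter (fun k => ∃ i : Fin K, i.1 + 1 ≤ ebhCount K α e ∧ sortDesc e i ≤ e k)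

/-- Simes function `S_K(p) = min_k (K/k) p_(k)`. -/
def simes (K : ℕ) (p : Fin K → ℝ) : ℝ := ⨅ i : Fin K, (K : ℝ) / (i.1 + 1) * sortAsc p i

/-- Harmonic number `ℓ_K = ∑_{k=1}^K 1/k`. -/
def harm (K : ℕ) : ℝ := ∑ k ∈ Finset.Icc 1 K, (1 : ℝ) / k

/-- An increasing (upper) subset of `ℝ^K`. -/
def IncreasingSet {K : ℕ} (A : Set (Fin K → ℝ)) : Prop := ∀ x ∈ A, ∀ y, x ≤ y → y ∈ A

/-- Positive regression dependence on the subset `N` of nulls. -/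
def PRDS {Ω : Type*} [MeasurableSpace Ω] (μ : Measure Ω) {K : ℕ}
    (P : Fin K → Ω → ℝ) (N : Finset (Fin K)) : Prop :=
  ∀ k ∈ N, ∀ A : Set (Fin K → ℝ), MeasurableSet A → IncreasingSet A →
    Monotone (fun x : ℝ => μ[|{ω | P k ω ≤ x}] {ω | (fun j => P j ω) ∈ A})

/-- False discovery proportion of a rejection set `D` w.r.t. the null set `N`. -/
def fdp {K : ℕ} (D N : Finset (Fin K)) : ℝ := ((D ∩ N).card : ℝ) / (max D.card 1 : ℕ)


section MainAux
variable {K : ℕ}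

lemma sortAsc_le_iff (p : Fin K → ℝ) (i : Fin K) (t : ℝ) :
    sortAsc p i ≤ t ↔ (i : ℕ) + 1 ≤ (univ.filter fun j => p j ≤ t).card := by
  have h := Tuple.lt_card_le_iff_apply_le_of_monotone (f := sortAsc p) (a := t) (j := i) (Tuple.monotone_sort p)
  rw [← h]
  have hcard : (univ.filter fun j => sortAsc p j ≤ t).card
      = (univ.filter fun j => p j ≤ t).card := by
    apply Finset.card_bij (fun j _ => Tuple.sort p j)
    · intro a ha; simp only [mem_filter, mem_univ, true_and] at ha ⊢; exact ha
    · intro a _ b _ hab; exact (Tuple.sort p).injective hab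
    · intro b hb; refine ⟨(Tuple.sort p).symm b, ?_, by simp⟩
      simp only [mem_filter, mem_univ, true_and] at hb ⊢
      simpa [sortAsc] using hb
  rw [hcard]
  exact ⟨fun h => h, fun h => h⟩

lemma sortAsc_mono_p {x y : Fin K → ℝ} (h : x ≤ y) (i : Fin K) :
    sortAsc x i ≤ sortAsc y i := by
  rw [sortAsc_le_iff]
  refine le_trans ((sortAsc_le_iff y i (sortAsc y i)).1 le_rfl) (Finset.card_le_card ?_)
  intro j hj
  simp only [mem_filter, mem_univ, true_and] at hj ⊢
  exact le_trans (h j) hj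

lemma bhCount_antitone (α : ℝ) {x y : Fin K → ℝ} (h : x ≤ y) :
    bhCount K α y ≤ bhCount K α x := by
  apply Finset.sup_mono
  intro i hi
  simp only [mem_filter, mem_univ, true_and] at hi ⊢
  refine le_trans ?_ hi
  have hs := sortAsc_mono_p h i
  gcongr

lemma bhCount_le (α : ℝ) (p : Fin K → ℝ) : bhCount K α p ≤ K := by
  apply Finset.sup_le
  intro i _
  exact i.2

lemma card_bhRejects (hK : 0 < K) {α : ℝ} (hα : 0 < α) (p : Fin K → ℝ) :
    (bhRejects K α p).card = bhCount K α p := by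
  set c := bhCount K α p with hc
  by_cases hc0 : c = 0
  · rw [hc0]
    simp only [Finset.card_eq_zero, bhRejects, Finset.filter_eq_empty_iff]
    rintro k' -
    rintro ⟨i, hi, -⟩
    omega
  · have hc1 : 1 ≤ c := Nat.one_le_iff_ne_zero.2 hc0
    have hcK : c ≤ K := bhCount_le α p
    set i0 : Fin K := ⟨c - 1, by omega⟩ with hi0
    have hi01 : i0.1 + 1 = c := by simp [hi0]; omega
    have hne : (univ.filter (fun i : Fin K => (K : ℝ) * sortAsc p i / (i.1 + 1) ≤ α)).Nonempty := by
      by_contra hemp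
      rw [Finset.not_nonempty_iff_eq_empty] at hemp
      rw [hc, bhCount, hemp] at hc0
      simp at hc0
    obtain ⟨b, hb, hbv⟩ := Finset.exists_mem_eq_sup _ hne
      (fun i : Fin K => i.1 + 1)
    have hbc : b = i0 := by
      apply Fin.ext
      have : c = b.1 + 1 := by rw [hc, bhCount, hbv]
      simp [hi0]; omega
    rw [hbc] at hb
    have hcond0 : (K : ℝ) * sortAsc p i0 / (i0.1 + 1) ≤ α := by
      simpa using (Finset.mem_filter.1 hb).2
    have hset : bhRejects K α p = univ.filter (fun k' => p k' ≤ sortAsc p i0) := by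
      ext k'
      simp only [bhRejects, mem_filter, mem_univ, true_and]
      constructor
      · rintro ⟨i, hi, hle⟩
        refine hle.trans (Tuple.monotone_sort p ?_)
        show i ≤ i0
        have : i.1 ≤ i0.1 := by omega
        exact this
      · intro h; exact ⟨i0, by omega, h⟩
    rw [hset]
    set m := (univ.filter (fun k' => p k' ≤ sortAsc p i0)).card with hm
    have hm1 : c ≤ m := by
      have := (sortAsc_le_iff p i0 (sortAsc p i0)).1 le_rfl
      omega
    have hmK : m ≤ K := by
      rw [hm]
      exact (Finset.card_filter_le _ _).trans (by simp)
    have hm2 : m ≤ c := by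
      set i1 : Fin K := ⟨m - 1, by omega⟩ with hi1
      have hi11 : i1.1 + 1 = m := by simp [hi1]; omega
      have hs1 : sortAsc p i1 ≤ sortAsc p i0 := by
        rw [sortAsc_le_iff, hi11]
      have hcond1 : (K : ℝ) * sortAsc p i1 / (i1.1 + 1) ≤ α := by
        rcases le_or_gt (sortAsc p i1) 0 with h0 | h0
        · have : (K : ℝ) * sortAsc p i1 / (i1.1 + 1) ≤ 0 := by
            apply div_nonpos_of_nonpos_of_nonneg
            · exact mul_nonpos_of_nonneg_of_nonpos (by positivity) h0
            · positivity
          linarith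
        · have ht0 : (0:ℝ) < sortAsc p i0 := lt_of_lt_of_le h0 hs1
          have hd1 : (0:ℝ) < (i0.1 : ℝ) + 1 := by positivity
          have hd2 : ((i0.1 : ℝ) + 1) ≤ ((i1.1 : ℝ) + 1) := by
            have hnat : i0.1 + 1 ≤ i1.1 + 1 := by omega
            exact_mod_cast hnat
          calc (K : ℝ) * sortAsc p i1 / (i1.1 + 1)
              ≤ (K : ℝ) * sortAsc p i0 / (i0.1 + 1) := by
                apply div_le_div₀ (by positivity)
                  (mul_le_mul_of_nonneg_left hs1 (by positivity)) hd1 hd2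
            _ ≤ α := hcond0
      have hle : i1.1 + 1 ≤ bhCount K α p :=
        Finset.le_sup (f := fun i : Fin K => i.1 + 1)
          (Finset.mem_filter.2 ⟨Finset.mem_univ _, hcond1⟩)
      omega
    omega

lemma bhCond_iff (hK : 0 < K) {α : ℝ} (s : ℝ) (i : Fin K) :
    (K:ℝ) * s / (i.1 + 1) ≤ α ↔ s ≤ α * (i.1 + 1) / K := by
  have h1 : (0:ℝ) < (i.1:ℝ) + 1 := by positivity
  have h2 : (0:ℝ) < (K:ℝ) := by exact_mod_cast hK
  rw [div_le_iff₀ h1, le_div_iff₀ h2]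
  constructor <;> intro h <;> nlinarith

lemma measurable_card_filter {Ω' : Type*} [MeasurableSpace Ω'] (g : Fin K → Ω' → ℝ)
    (hg : ∀ j, Measurable (g j)) (t : ℝ) :
    Measurable (fun ω => (univ.filter fun j => g j ω ≤ t).card) := by
  have h : (fun ω => (univ.filter fun j => g j ω ≤ t).card)
      = fun ω => ∑ j : Fin K, if g j ω ≤ t then 1 else 0 := by
    funext ω; rw [Finset.card_filter]
  rw [h]
  apply Finset.measurable_sum
  intro j _
  exact Measurable.ite (measurableSet_le (hg j) measurable_const)
    measurable_const measurable_const

lemma measurableSet_le_bhCount {Ω' : Type*} [MeasurableSpace Ω'] {α : ℝ} (hK : 0 < K)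
    (g : Fin K → Ω' → ℝ) (hg : ∀ j, Measurable (g j)) (r : ℕ) (hr : 1 ≤ r) :
    MeasurableSet {ω | r ≤ bhCount K α (fun j => g j ω)} := by
  have hset : {ω | r ≤ bhCount K α (fun j => g j ω)}
      = ⋃ i : Fin K, ({ω | (i : ℕ) + 1 ≤
          (univ.filter fun j => g j ω ≤ α * (i.1 + 1) / K).card} ∩
          {ω | r ≤ i.1 + 1}) := by
    ext ω
    simp only [Set.mem_setOf_eq, Set.mem_iUnion, Set.mem_inter_iff]
    constructor
    · intro h
      obtain ⟨i, hi, hri⟩ := (Finset.le_sup_iff (by omega : (0:ℕ) < r)).1 h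
      refine ⟨i, ?_, hri⟩
      rw [← sortAsc_le_iff, ← bhCond_iff hK]
      exact (Finset.mem_filter.1 hi).2
    · rintro ⟨i, h1, h2⟩
      refine le_trans h2 (Finset.le_sup (f := fun i : Fin K => i.1 + 1)
        (Finset.mem_filter.2 ⟨Finset.mem_univ _, ?_⟩))
      rw [bhCond_iff hK, sortAsc_le_iff]
      exact h1
  rw [hset]
  apply MeasurableSet.iUnion
  intro i
  apply MeasurableSet.inter
  · exact measurable_card_filter g hg _ measurableSet_Ici
  · by_cases h : r ≤ i.1 + 1
    · simp [h]
    · simp [h]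

end MainAux

end

theorem prds_beta_telescoping
    {Ω : Type*} [MeasurableSpace Ω] (μ : Measure Ω) [IsProbabilityMeasure μ]
    {K : ℕ} (hK : 0 < K) {α : ℝ} (hα : α ∈ Set.Ioo (0 : ℝ) 1)
    (P : Fin K → Ω → ℝ) (hP : ∀ k, Measurable (P k)) (N : Finset (Fin K))
    (h_prds : PRDS μ P N) (k : Fin K) (hk : k ∈ N)
    (h_pos : ∀ r ∈ Finset.Icc 1 K, 0 < μ {ω | P k ω ≤ α * r / K}) :
    (∀ r ∈ Finset.Icc 1 K,
      (μ[|{ω | P k ω ≤ α * r / K}]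
          {ω | (bhRejects K α (fun j => P j ω)).card = r}).toReal ≤
        (μ[|{ω | P k ω ≤ α * r / K}]
            {ω | r ≤ (bhRejects K α (fun j => P j ω)).card}).toReal -
          (μ[|{ω | P k ω ≤ α * (r + 1) / K}]
              {ω | r + 1 ≤ (bhRejects K α (fun j => P j ω)).card}).toReal) ∧
    ∑ r ∈ Finset.Icc 1 K,
        (μ[|{ω | P k ω ≤ α * r / K}]
            {ω | (bhRejects K α (fun j => P j ω)).card = r}).toReal ≤ 1 := by
  obtain ⟨hα0, hα1⟩ := hα
  have hKR : (0:ℝ) < (K:ℝ) := by exact_mod_cast hK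
  have hcard : ∀ p : Fin K → ℝ, (bhRejects K α p).card = bhCount K α p :=
    fun p => card_bhRejects hK hα0 p
  simp only [hcard]
  set R : Ω → ℕ := fun ω => bhCount K α (fun j => P j ω) with hRdef
  have hBmeas : ∀ r : ℕ, 1 ≤ r → MeasurableSet {ω | r ≤ R ω} :=
    fun r hr => measurableSet_le_bhCount hK P hP r hr
  have hpos : ∀ r : ℕ, 1 ≤ r → μ {ω | P k ω ≤ α * r / K} ≠ 0 := by
    intro r hr
    rcases le_or_gt r K with h | h
    · exact (h_pos r (Finset.mem_Icc.2 ⟨hr, h⟩)).ne'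
    · refine (lt_of_lt_of_le (h_pos K (Finset.mem_Icc.2 ⟨hK, le_rfl⟩)) (measure_mono ?_)).ne'
      intro ω hω
      simp only [Set.mem_setOf_eq] at hω ⊢
      refine hω.trans ?_
      have hKr : (K:ℝ) ≤ (r:ℝ) := by exact_mod_cast h.le
      gcongr
  have hprob : ∀ r : ℕ, 1 ≤ r → IsProbabilityMeasure (μ[|{ω | P k ω ≤ α * r / K}]) :=
    fun r hr => cond_isProbabilityMeasure (hpos r hr)
  set f : ℕ → ℝ := fun r => (μ[|{ω | P k ω ≤ α * r / K}] {ω | r ≤ R ω}).toReal with hf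
  -- PRDS comparison
  have hcomp : ∀ r : ℕ, 1 ≤ r →
      f (r + 1) ≤ (μ[|{ω | P k ω ≤ α * r / K}] {ω | r + 1 ≤ R ω}).toReal := by
    intro r hr
    set A : Set (Fin K → ℝ) := {x | ¬ (r + 1 ≤ bhCount K α x)} with hA
    have hAmeas : MeasurableSet A := by
      have h1 := measurableSet_le_bhCount (Ω' := Fin K → ℝ) (α := α) hK (fun j x => x j)
        (fun j => measurable_pi_apply j) (r + 1) (by omega)
      have h2 : A = {x : Fin K → ℝ | r + 1 ≤ bhCount K α (fun j => x j)}ᶜ := by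
        ext x; simp [hA]
      rw [h2]
      exact h1.compl
    have hAinc : IncreasingSet A := by
      intro x hx y hxy
      simp only [hA, Set.mem_setOf_eq] at hx ⊢
      intro hcon
      exact hx (le_trans hcon (bhCount_antitone α hxy))
    have hm := h_prds k hk A hAmeas hAinc
    have hle := hm (show α * r / K ≤ α * (r + 1) / K by gcongr; linarith)
    simp only at hle
    have hAset : {ω | (fun j => P j ω) ∈ A} = {ω | r + 1 ≤ R ω}ᶜ := by
      ext ω; simp [hA, hRdef]
    rw [hAset] at hle
    haveI h1 := hprob r hr
    haveI h2 := hprob (r + 1) (by omega)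
    have hBm := hBmeas (r + 1) (by omega)
    have e1 : (μ[|{ω | P k ω ≤ α * r / K}] {ω | r + 1 ≤ R ω}ᶜ).toReal
        = 1 - (μ[|{ω | P k ω ≤ α * r / K}] {ω | r + 1 ≤ R ω}).toReal := by
      rw [prob_compl_eq_one_sub hBm, ENNReal.toReal_sub_of_le prob_le_one ENNReal.one_ne_top]
      simp
    have e2 : (μ[|{ω | P k ω ≤ α * ((r:ℝ) + 1) / K}] {ω | r + 1 ≤ R ω}ᶜ).toReal
        = 1 - (μ[|{ω | P k ω ≤ α * ((r:ℝ) + 1) / K}] {ω | r + 1 ≤ R ω}).toReal := by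
      have h2' : IsProbabilityMeasure (μ[|{ω | P k ω ≤ α * ((r:ℝ) + 1) / K}]) := by
        have : ((r:ℝ) + 1) = ((r + 1 : ℕ) : ℝ) := by push_cast; ring
        rw [this]; exact h2
      rw [prob_compl_eq_one_sub hBm, ENNReal.toReal_sub_of_le prob_le_one ENNReal.one_ne_top]
      simp
    have hle' := ENNReal.toReal_mono (measure_ne_top _ _) hle
    rw [e1, e2] at hle'
    have hfv : f (r + 1)
        = (μ[|{ω | P k ω ≤ α * ((r:ℝ) + 1) / K}] {ω | r + 1 ≤ R ω}).toReal := by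
      simp only [hf]
      norm_num
    rw [hfv]
    linarith
  -- key inequality
  have key : ∀ r ∈ Finset.Icc 1 K,
      (μ[|{ω | P k ω ≤ α * r / K}] {ω | R ω = r}).toReal ≤ f r - f (r + 1) := by
    intro r hrm
    obtain ⟨hr1, hrK⟩ := Finset.mem_Icc.1 hrm
    haveI := hprob r hr1
    set ν := μ[|{ω | P k ω ≤ α * r / K}] with hν
    have hsplit : ν {ω | r ≤ R ω} = ν {ω | R ω = r} + ν {ω | r + 1 ≤ R ω} := by
      rw [← measure_union ?hd (hBmeas (r + 1) (by omega))]
      · congr 1; ext ω; simp only [Set.mem_union, Set.mem_setOf_eq]; omega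
      case hd =>
        rw [Set.disjoint_left]; intro ω h1 h2
        simp only [Set.mem_setOf_eq] at h1 h2; omega
    have h1 : (ν {ω | R ω = r}).toReal
        = (ν {ω | r ≤ R ω}).toReal - (ν {ω | r + 1 ≤ R ω}).toReal := by
      rw [hsplit, ENNReal.toReal_add (measure_ne_top _ _) (measure_ne_top _ _)]; ring
    rw [h1]
    have hc := hcomp r hr1
    have hfr : f r = (ν {ω | r ≤ R ω}).toReal := rfl
    linarith
  constructor
  · intro r hrm
    have hkey := key r hrm
    have hfv : f (r + 1)
        = (μ[|{ω | P k ω ≤ α * ((r:ℝ) + 1) / K}] {ω | r + 1 ≤ R ω}).toReal := by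
      simp only [hf]; norm_num
    rw [hfv] at hkey
    exact hkey
  · have htel : ∀ n : ℕ, ∑ r ∈ Finset.Icc 1 n, (f r - f (r + 1)) = f 1 - f (n + 1) := by
      intro n
      induction n with
      | zero => simp
      | succ n ih => rw [Finset.sum_Icc_succ_top (by omega), ih]; ring
    calc ∑ r ∈ Finset.Icc 1 K, (μ[|{ω | P k ω ≤ α * r / K}] {ω | R ω = r}).toReal
        ≤ ∑ r ∈ Finset.Icc 1 K, (f r - f (r + 1)) := Finset.sum_le_sum key
      _ = f 1 - f (K + 1) := htel K
      _ ≤ f 1 := by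
          have h0 : 0 ≤ f (K + 1) := ENNReal.toReal_nonneg
          linarith
      _ ≤ 1 := by
          haveI := hprob 1 le_rfl
          have := prob_le_one (μ := μ[|{ω | P k ω ≤ α * (1:ℕ) / K}]) (s := {ω | 1 ≤ R ω})
          have ht := ENNReal.toReal_mono ENNReal.one_ne_top this
          simpa [hf] using ht
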